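/- arXiv:2102.04657 — 3 statements merged into one kernel-verified Lean document; each statement's English description precedes it below -/
import Mathlib

section
/- Let K be an algebraically closed field and let M_r ⊆ K^{m×n} be the variety of matrices of rank at most r. For any matrix A ∈ M_r with rank(A) = r, the tangent space to M_r at A is T_A M_r = {CA + AC' : C ∈ K^{m×m}, C' ∈ K^{n×n}}. -/
open scoped BigOperators

/-- `SliceRankLE T r` : the 3-tensor `T` has slice rank at most `r`. -/
def SliceRankLE {F : Type*} [Field F] {n1 n2 n3 : ℕ}
    (T : Fin n1 → Fin n2 → Fin n3 → F) (r : ℕ) : Prop :=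
  ∃ r1 r2 r3 : ℕ, r1 + r2 + r3 = r ∧
    ∃ (a : Fin r1 → Fin n1 → F) (g1 : Fin r1 → Fin n2 → Fin n3 → F)
      (b : Fin r2 → Fin n2 → F) (g2 : Fin r2 → Fin n1 → Fin n3 → F)
      (c : Fin r3 → Fin n3 → F) (g3 : Fin r3 → Fin n1 → Fin n2 → F),
      ∀ i j k, T i j k =
        (∑ s, a s i * g1 s j k) + (∑ s, b s j * g2 s i k) + (∑ s, c s k * g3 s i j)

/-- The slice rank of a 3-tensor. -/
noncomputable def sliceRank {F : Type*} [Field F] {n1 n2 n3 : ℕ}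
    (T : Fin n1 → Fin n2 → Fin n3 → F) : ℕ :=
  sInf {r | SliceRankLE T r}

/-- Dimension of an affine algebraic set: Krull dimension of its coordinate ring. -/
noncomputable def varietyDim {K : Type*} [Field K] {σ : Type*} (V : Set (σ → K)) : ℕ :=
  ENat.toNat (WithBot.unbotD 0 (ringKrullDim (MvPolynomial σ K ⧸ MvPolynomial.vanishingIdeal K V)))

/-- The kernel variety of the bilinear map corresponding to a 3-tensor,
over the algebraic closure. -/
def kerSet {F : Type*} [Field F] {n1 n2 n3 : ℕ}
    (T : Fin n1 → Fin n2 → Fin n3 → F) :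
    Set ((Fin n1 ⊕ Fin n2) → AlgebraicClosure F) :=
  {w | ∀ k : Fin n3,
    ∑ i : Fin n1, ∑ j : Fin n2,
      algebraMap F (AlgebraicClosure F) (T i j k) * w (Sum.inl i) * w (Sum.inr j) = 0}

/-- The geometric rank of a 3-tensor. -/
noncomputable def geoRank {F : Type*} [Field F] {n1 n2 n3 : ℕ}
    (T : Fin n1 → Fin n2 → Fin n3 → F) : ℕ :=
  n1 + n2 - varietyDim (kerSet T)

/-- The analytic rank of a 3-tensor over a finite field, w.r.t. an additive character χ. -/
noncomputable def analyticRank {F : Type*} [Field F] [Fintype F] {n1 n2 n3 : ℕ}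
    (χ : AddChar F ℂ) (T : Fin n1 → Fin n2 → Fin n3 → F) : ℝ :=
  - Real.logb (Fintype.card F)
      (((∑ x : Fin n1 → F, ∑ y : Fin n2 → F, ∑ z : Fin n3 → F,
          χ (∑ i, ∑ j, ∑ k, T i j k * x i * y j * z k)) /
        ((Fintype.card F : ℂ) ^ (n1 + n2 + n3))).re)

/-- The tangent space of a (sub)set `V ⊆ K^σ` at a point `p`. -/
def tangentSpaceAt (K : Type*) [Field K] {σ : Type*} [Fintype σ] [DecidableEq σ]
    (V : Set (σ → K)) (p : σ → K) : Set (σ → K) :=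
  {v | ∀ g ∈ MvPolynomial.vanishingIdeal K V,
    ∑ i, v i * MvPolynomial.eval p (MvPolynomial.pderiv i g) = 0}

/-- `matrixSRLE L r`: the matrix space `L` has slice rank at most `r`; the slice rank of
a matrix space is the slice rank of the 3-tensor obtained from any basis of `L`. -/
def matrixSRLE {K : Type*} [Field K] {m n : ℕ}
    (L : Submodule K (Matrix (Fin m) (Fin n) K)) (r : ℕ) : Prop :=
  ∀ (d : ℕ) (B : Fin d → Matrix (Fin m) (Fin n) K),
    LinearIndependent K B → Submodule.span K (Set.range B) = L →
      SliceRankLE (fun i j k => B k i j) r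

/-- The slice rank of a matrix space. -/
noncomputable def matrixSliceRank {K : Type*} [Field K] {m n : ℕ}
    (L : Submodule K (Matrix (Fin m) (Fin n) K)) : ℕ :=
  sInf {r | matrixSRLE L r}

/-- The min-entropy of a map between finite sets (inputs uniform at random). -/
noncomputable def minEntropy {A B : Type*} [Fintype A] [Fintype B] [DecidableEq B]
    (X : A → B) : ℝ :=
  - Real.logb 2
      (((Finset.univ.sup fun b => (Finset.univ.filter fun a => X a = b).card : ℕ) : ℝ) /
        (Fintype.card A : ℝ))

/-- The Levi-Civita tensor: the 3-tensor of the 3×3 determinant polynomial. -/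
def leviCivita (F : Type*) [Field F] : Fin 3 → Fin 3 → Fin 3 → F := fun i j k =>
  if (i, j, k) = (0, 1, 2) ∨ (i, j, k) = (1, 2, 0) ∨ (i, j, k) = (2, 0, 1) then 1
  else if (i, j, k) = (2, 1, 0) ∨ (i, j, k) = (1, 0, 2) ∨ (i, j, k) = (0, 2, 1) then -1
  else 0

lemma coeff_one_mul' {K : Type*} [CommRing K] (a b : Polynomial K) :
    (a * b).coeff 1 = a.coeff 0 * b.coeff 1 + a.coeff 1 * b.coeff 0 := by
  rw [Polynomial.coeff_mul]
  have h : Finset.HasAntidiagonal.antidiagonal (1 : ℕ) = {(0,1),(1,0)} := by decide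
  rw [h, Finset.sum_pair (by decide)]

open Polynomial MvPolynomial in
lemma aeval_coeff_zero {K : Type*} [CommRing K] {σ : Type*}
    (f : σ → Polynomial K) (g : MvPolynomial σ K) :
    (MvPolynomial.aeval f g).coeff 0 = MvPolynomial.eval (fun i => (f i).coeff 0) g := by
  induction g using MvPolynomial.induction_on with
  | C a => simp [Polynomial.coeff_zero_eq_eval_zero]
  | add p q hp hq => simp [hp, hq]
  | mul_X p i hp =>
    simp [Polynomial.coeff_zero_eq_eval_zero] at hp ⊢
    rw [hp]

open Polynomial MvPolynomial in
lemma aeval_coeff_one {K : Type*} [CommRing K] {σ : Type*} [Fintype σ] [DecidableEq σ]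
    (f : σ → Polynomial K) (g : MvPolynomial σ K) :
    (MvPolynomial.aeval f g).coeff 1 =
      ∑ i, (f i).coeff 1 *
        MvPolynomial.eval (fun j => (f j).coeff 0) (MvPolynomial.pderiv i g) := by
  induction g using MvPolynomial.induction_on with
  | C a => simp
  | add p q hp hq => simp [hp, hq, mul_add, Finset.sum_add_distrib]
  | mul_X p i hp =>
    rw [map_mul, MvPolynomial.aeval_X, coeff_one_mul', aeval_coeff_zero, hp]
    have key : ∀ x : σ, (MvPolynomial.eval fun j => (f j).coeff 0)
        (MvPolynomial.pderiv x (p * MvPolynomial.X i)) =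
        (MvPolynomial.eval fun j => (f j).coeff 0) (MvPolynomial.pderiv x p) * (f i).coeff 0 +
          (if x = i then (MvPolynomial.eval fun j => (f j).coeff 0) p else 0) := by
      intro x
      rw [MvPolynomial.pderiv_mul]
      by_cases hx : x = i
      · subst hx; simp [MvPolynomial.pderiv_X_self]
      · simp [MvPolynomial.pderiv_X_of_ne (Ne.symm hx), hx]
    simp only [key, mul_add, Finset.sum_add_distrib, mul_ite, mul_zero]
    rw [Finset.sum_ite_eq' Finset.univ i]
    simp only [Finset.mem_univ, if_true, Finset.sum_mul]
    rw [add_comm]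
    congr 1
    · apply Finset.sum_congr rfl
      intro j _
      ring
    · exact mul_comm _ _

open Polynomial MvPolynomial in
lemma eval_aeval' {K : Type*} [CommRing K] {σ : Type*} (t : K)
    (f : σ → Polynomial K) (g : MvPolynomial σ K) :
    Polynomial.eval t (MvPolynomial.aeval f g) =
      MvPolynomial.eval (fun i => (f i).eval t) g := by
  induction g using MvPolynomial.induction_on with
  | C a => simp
  | add p q hp hq => simp [hp, hq]
  | mul_X p i hp => simp [hp]

lemma det_eq_zero_of_rank_lt' {K : Type*} [Field K] {N : ℕ}
    (M : Matrix (Fin N) (Fin N) K) (h : M.rank < N) : M.det = 0 := by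
  by_contra hd
  have := Matrix.rank_of_isUnit M ((Matrix.isUnit_iff_isUnit_det M).2 (Ne.isUnit hd))
  rw [this] at h
  simp at h

lemma coeff_one_det {K : Type*} [CommRing K] {r : ℕ}
    (M B : Matrix (Fin (r+1)) (Fin (r+1)) K)
    (hrow : ∀ j, M 0 j = 0) (hcol : ∀ i, M i 0 = 0) :
    (Matrix.det (Matrix.of fun k l =>
        Polynomial.C (M k l) + Polynomial.X * Polynomial.C (B k l))).coeff 1 =
      B 0 0 * (M.submatrix Fin.succ Fin.succ).det := by
  set N : Matrix (Fin (r+1)) (Fin (r+1)) (Polynomial K) :=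
    Matrix.of fun k l => Polynomial.C (M k l) + Polynomial.X * Polynomial.C (B k l) with hN
  have hc0 : ∀ (i : Fin (r+1)),
      ((N.submatrix i.succAbove Fin.succ).det).coeff 0 =
        (M.submatrix i.succAbove Fin.succ).det := by
    intro i
    rw [Polynomial.coeff_zero_eq_eval_zero, ← Polynomial.coe_evalRingHom, RingHom.map_det]
    congr 1
    ext k l
    simp [hN]
  rw [Matrix.det_succ_column_zero, Polynomial.finset_sum_coeff]
  rw [Finset.sum_eq_single (0 : Fin (r+1))]
  · have hN00 : N 0 0 = Polynomial.X * Polynomial.C (B 0 0) := by simp [hN, hcol]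
    rw [hN00]
    simp only [Fin.val_zero, pow_zero, one_smul, Fin.succAbove_zero, one_mul]
    rw [mul_assoc]
    rw [Polynomial.coeff_X_mul (Polynomial.C (B 0 0) * (N.submatrix Fin.succ Fin.succ).det) 0]
    rw [Polynomial.coeff_C_mul]
    have := hc0 0
    rw [Fin.succAbove_zero] at this
    rw [this]
  · intro i _ hi
    have hr : 0 < r := by
      have h1 : 0 < i.val := Fin.pos_of_ne_zero hi
      have h2 : i.val ≤ r := Nat.lt_succ_iff.mp i.isLt
      exact lt_of_lt_of_le h1 h2
    have hi0 : N i 0 = Polynomial.X * Polynomial.C (B i 0) := by simp [hN, hcol]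
    rw [hi0]
    have hdz : (M.submatrix i.succAbove Fin.succ).det = 0 := by
      apply Matrix.det_eq_zero_of_row_eq_zero ⟨0, hr⟩
      intro j
      have h0 : i.succAbove ⟨0, hr⟩ = 0 := by
        rw [Fin.succAbove_of_castSucc_lt]
        · rfl
        · exact lt_of_le_of_lt (Fin.zero_le _) (Fin.pos_of_ne_zero hi)
      simp [Matrix.submatrix_apply, h0, hrow]
    have hsgn : ((-1 : Polynomial K)) ^ (i : ℕ) = Polynomial.C ((-1 : K) ^ (i : ℕ)) := by
      simp
    rw [hsgn, mul_assoc, mul_assoc, Polynomial.coeff_C_mul]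
    rw [Polynomial.coeff_X_mul (Polynomial.C (B i 0) * (N.submatrix i.succAbove Fin.succ).det) 0]
    rw [Polynomial.coeff_C_mul, hc0 i, hdz]
    simp
  · simp

lemma exists_rank_factorization {K : Type*} [Field K] {m n r : ℕ}
    (A : Matrix (Fin m) (Fin n) K) (hA : A.rank = r) :
    ∃ (B : Matrix (Fin m) (Fin r) K) (C : Matrix (Fin r) (Fin n) K)
      (R₁ : Matrix (Fin r) (Fin m) K) (S₁ : Matrix (Fin n) (Fin r) K),
      A = B * C ∧ R₁ * B = 1 ∧ C * S₁ = 1 := by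
  classical
  set L := A.mulVecLin with hL
  set V := LinearMap.range L with hV
  have hfin : Module.finrank K V = r := hA
  let b : Module.Basis (Fin r) K V := (Module.finBasis K V).reindex (finCongr hfin)
  let ι : (Fin r → K) →ₗ[K] (Fin m → K) := V.subtype ∘ₗ b.equivFun.symm.toLinearMap
  let π : (Fin n → K) →ₗ[K] (Fin r → K) := b.equivFun.toLinearMap ∘ₗ L.rangeRestrict
  have hιπ : ι ∘ₗ π = L := by
    have h1 : ι ∘ₗ π = V.subtype ∘ₗ L.rangeRestrict := by
      ext x j
      simp only [ι, π, LinearMap.coe_comp, Function.comp_apply, LinearEquiv.coe_coe]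
      have hu := b.sum_repr (L.rangeRestrict (Pi.single x 1))
      have h2 := congrArg (fun (w : V) => (w : Fin m → K) j) hu
      simp only [Module.Basis.equivFun_symm_apply]
      simpa using h2
    rw [h1]
    exact LinearMap.subtype_comp_codRestrict _ _ _
  have hι_inj : Function.Injective ι := by
    have : ⇑ι = Subtype.val ∘ ⇑b.equivFun.symm := rfl
    rw [this]
    exact Subtype.val_injective.comp b.equivFun.symm.injective
  have hπ_surj : Function.Surjective π := by
    have : ⇑π = ⇑b.equivFun ∘ ⇑L.rangeRestrict := rfl
    rw [this]
    exact b.equivFun.surjective.comp L.surjective_rangeRestrict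
  obtain ⟨l, hl⟩ := ι.exists_leftInverse_of_injective (LinearMap.ker_eq_bot.2 hι_inj)
  obtain ⟨s, hs⟩ := π.exists_rightInverse_of_surjective (LinearMap.range_eq_top.2 hπ_surj)
  refine ⟨LinearMap.toMatrix' ι, LinearMap.toMatrix' π,
    LinearMap.toMatrix' l, LinearMap.toMatrix' s, ?_, ?_, ?_⟩
  · rw [← LinearMap.toMatrix'_comp, hιπ, hL]
    rw [← Matrix.toLin'_apply', LinearMap.toMatrix'_toLin']
  · rw [← LinearMap.toMatrix'_comp, hl, LinearMap.toMatrix'_id]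
  · rw [← LinearMap.toMatrix'_comp, hs, LinearMap.toMatrix'_id]

open MvPolynomial in
/-- The polynomial `det (R · M · S)` in the entries of an `m × n` matrix `M`. -/
noncomputable def gpoly {K : Type*} [Field K] {m n r : ℕ}
    (R : Matrix (Fin (r+1)) (Fin m) K) (S : Matrix (Fin n) (Fin (r+1)) K) :
    MvPolynomial (Fin m × Fin n) K :=
  Matrix.det (Matrix.of fun k l => ∑ i : Fin m, ∑ j : Fin n,
    MvPolynomial.C (R k i) * (MvPolynomial.X (i, j) * MvPolynomial.C (S j l)))

open MvPolynomial in
lemma aeval_gpoly {K : Type*} [Field K] {m n r : ℕ}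
    (R : Matrix (Fin (r+1)) (Fin m) K) (S : Matrix (Fin n) (Fin (r+1)) K)
    {T : Type*} [CommRing T] [Algebra K T] (f : Fin m × Fin n → T) :
    MvPolynomial.aeval f (gpoly R S) =
      Matrix.det (Matrix.of fun k l => ∑ i : Fin m, ∑ j : Fin n,
        algebraMap K T (R k i) * (f (i, j) * algebraMap K T (S j l))) := by
  rw [gpoly]
  rw [show (MvPolynomial.aeval f) (Matrix.of fun k l => ∑ i : Fin m, ∑ j : Fin n,
      MvPolynomial.C (R k i) * (MvPolynomial.X (i, j) * MvPolynomial.C (S j l))).det =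
    (MvPolynomial.aeval f).toRingHom (Matrix.of fun k l => ∑ i : Fin m, ∑ j : Fin n,
      MvPolynomial.C (R k i) * (MvPolynomial.X (i, j) * MvPolynomial.C (S j l))).det from rfl]
  rw [RingHom.map_det]
  congr 1
  ext k l
  simp [Matrix.map_apply, map_sum, MvPolynomial.algHom_C]

lemma eval_gpoly {K : Type*} [Field K] {m n r : ℕ}
    (R : Matrix (Fin (r+1)) (Fin m) K) (S : Matrix (Fin n) (Fin (r+1)) K)
    (p : Fin m × Fin n → K) :
    MvPolynomial.eval p (gpoly R S) =
      Matrix.det (R * (Matrix.of fun i j => p (i, j)) * S) := by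
  have h := aeval_gpoly R S (T := K) p
  rw [show MvPolynomial.eval p (gpoly R S) = MvPolynomial.aeval p (gpoly R S) by
    rw [← MvPolynomial.coe_aeval_eq_eval]; rfl]
  rw [h]
  congr 1
  ext k l
  rw [Matrix.mul_apply, Matrix.of_apply]
  rw [Finset.sum_comm]
  apply Finset.sum_congr rfl
  intro j _
  rw [Matrix.mul_apply, Finset.sum_mul]
  apply Finset.sum_congr rfl
  intro i _
  simp [Matrix.of_apply]
  ring

lemma gpoly_vanishes {K : Type*} [Field K] {m n r : ℕ}
    (R : Matrix (Fin (r+1)) (Fin m) K) (S : Matrix (Fin n) (Fin (r+1)) K) :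
    gpoly R S ∈ MvPolynomial.vanishingIdeal K
      {v : Fin m × Fin n → K | (Matrix.of fun i j => v (i, j)).rank ≤ r} := by
  rw [MvPolynomial.mem_vanishingIdeal_iff]
  intro p hp
  rw [show MvPolynomial.aeval p (gpoly R S) = MvPolynomial.eval p (gpoly R S) from rfl, eval_gpoly]
  apply det_eq_zero_of_rank_lt'
  calc (R * (Matrix.of fun i j => p (i, j)) * S).rank
      ≤ (R * (Matrix.of fun i j => p (i, j))).rank := Matrix.rank_mul_le_left _ _
    _ ≤ (Matrix.of fun i j => p (i, j)).rank := Matrix.rank_mul_le_right _ _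
    _ ≤ r := hp
    _ < r + 1 := Nat.lt_succ_self r

/-- The tangent space to the determinantal variety `M_r ⊆ K^{m×n}` at a
matrix `A` of rank exactly `r` is `{CA + AC'}`. -/
theorem tangentSpace_determinantal
    {K : Type*} [Field K] [IsAlgClosed K] {m n r : ℕ}
    (A : Matrix (Fin m) (Fin n) K) (hA : A.rank = r) :
    tangentSpaceAt K
        {v : Fin m × Fin n → K | (Matrix.of fun i j => v (i, j)).rank ≤ r}
        (fun p => A p.1 p.2) =
      {v : Fin m × Fin n → K |
        ∃ (C : Matrix (Fin m) (Fin m) K) (C' : Matrix (Fin n) (Fin n) K),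
          v = fun p => (C * A + A * C') p.1 p.2} := by
  classical
  ext v
  simp only [tangentSpaceAt, Set.mem_setOf_eq]
  constructor
  · intro hv
    obtain ⟨B, Cm, R₁, S₁, hBC, hR₁, hS₁⟩ := exists_rank_factorization A hA
    set Ap : Matrix (Fin n) (Fin m) K := S₁ * R₁ with hAp
    set P : Matrix (Fin m) (Fin m) K := A * Ap with hP
    set Q : Matrix (Fin n) (Fin n) K := Ap * A with hQ
    set Vm : Matrix (Fin m) (Fin n) K := Matrix.of (fun i j => v (i, j)) with hVm
    have hPAA : P * A = A := by
      rw [hP, hAp, hBC]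
      calc B * Cm * (S₁ * R₁) * (B * Cm)
          = B * ((Cm * S₁) * ((R₁ * B) * Cm)) := by simp only [Matrix.mul_assoc]
        _ = B * Cm := by rw [hS₁, hR₁]; simp [Matrix.one_mul]
    have hPA : (1 - P) * A = 0 := by
      rw [Matrix.sub_mul, hPAA, Matrix.one_mul, sub_self]
    have hAQ : A * (1 - Q) = 0 := by
      have hAQA : A * Q = A := by
        rw [hQ, hAp, hBC]
        calc B * Cm * (S₁ * R₁ * (B * Cm))
            = B * ((Cm * S₁) * ((R₁ * B) * Cm)) := by simp only [Matrix.mul_assoc]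
          _ = B * Cm := by rw [hS₁, hR₁]; simp [Matrix.one_mul]
      rw [Matrix.mul_sub, hAQA, Matrix.mul_one, sub_self]
    have key : (1 - P) * Vm * (1 - Q) = 0 := by
      ext i₀ j₀
      set R : Matrix (Fin (r+1)) (Fin m) K :=
        Matrix.of (fun k i => Fin.cases ((1 - P) i₀ i) (fun s => R₁ s i) k) with hR
      set S : Matrix (Fin n) (Fin (r+1)) K :=
        Matrix.of (fun j l => Fin.cases ((1 - Q) j j₀) (fun s => S₁ j s) l) with hS
      set M : Matrix (Fin (r+1)) (Fin (r+1)) K := R * A * S with hM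
      have hR0 : ∀ i, R 0 i = (1 - P) i₀ i := fun i => rfl
      have hRs : ∀ s i, R (Fin.succ s) i = R₁ s i := fun s i => rfl
      have hS0 : ∀ j, S j 0 = (1 - Q) j j₀ := fun j => rfl
      have hSs : ∀ j s, S j (Fin.succ s) = S₁ j s := fun j s => rfl
      have hRA : ∀ j, (R * A) 0 j = 0 := by
        intro j
        rw [Matrix.mul_apply]
        calc ∑ i, R 0 i * A i j = ∑ i, (1 - P) i₀ i * A i j :=
              Finset.sum_congr rfl (fun i _ => by rw [hR0])
          _ = (((1 - P) * A : Matrix (Fin m) (Fin n) K)) i₀ j := (Matrix.mul_apply).symm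
          _ = 0 := by rw [hPA, Matrix.zero_apply]
      have hrow : ∀ l, M 0 l = 0 := by
        intro l
        rw [hM, Matrix.mul_apply]
        apply Finset.sum_eq_zero
        intro j _
        rw [hRA j, zero_mul]
      have hcol : ∀ k, M k 0 = 0 := by
        intro k
        rw [hM, Matrix.mul_apply]
        calc ∑ j, (R * A) k j * S j 0 = ∑ j, (R * A) k j * (1 - Q) j j₀ :=
              Finset.sum_congr rfl (fun j _ => by rw [hS0])
          _ = (((R * A) * (1 - Q) : Matrix (Fin (r+1)) (Fin n) K)) k j₀ := (Matrix.mul_apply).symm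
          _ = 0 := by rw [Matrix.mul_assoc, hAQ, Matrix.mul_zero, Matrix.zero_apply]
      have hsub : M.submatrix Fin.succ Fin.succ = R₁ * A * S₁ := by
        ext s t
        rw [Matrix.submatrix_apply, hM, Matrix.mul_apply, Matrix.mul_apply]
        apply Finset.sum_congr rfl
        intro j _
        rw [hSs, Matrix.mul_apply, Matrix.mul_apply]
        congr 1
        all_goals exact Finset.sum_congr rfl (fun i _ => by rw [hRs])
      have hdetsub : (M.submatrix Fin.succ Fin.succ).det = 1 := by
        rw [hsub, hBC]
        have : R₁ * (B * Cm) * S₁ = 1 := by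
          calc R₁ * (B * Cm) * S₁ = (R₁ * B) * (Cm * S₁) := by simp only [Matrix.mul_assoc]
            _ = 1 := by rw [hR₁, hS₁, Matrix.one_mul]
        rw [this, Matrix.det_one]
      have hg := hv (gpoly R S) (gpoly_vanishes R S)
      set f : Fin m × Fin n → Polynomial K :=
        fun p => Polynomial.C (A p.1 p.2) + Polynomial.X * Polynomial.C (v p) with hf
      have hf0 : (fun p => (f p).coeff 0) = (fun p : Fin m × Fin n => A p.1 p.2) := by
        funext p
        simp [hf]
      have hf1 : ∀ p, (f p).coeff 1 = v p := by
        intro p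
        simp [hf, Polynomial.coeff_C]
      have hco := aeval_coeff_one f (gpoly R S)
      rw [hf0] at hco
      simp only [hf1] at hco
      have haev : MvPolynomial.aeval f (gpoly R S) =
          Matrix.det (Matrix.of fun k l =>
            Polynomial.C (M k l) + Polynomial.X * Polynomial.C ((R * Vm * S) k l)) := by
        rw [aeval_gpoly]
        congr 1
        apply Matrix.ext
        intro k l
        have eM : M k l = ∑ i, ∑ j, R k i * (A i j * S j l) := by
          rw [hM, Matrix.mul_apply, Finset.sum_comm]
          apply Finset.sum_congr rfl
          intro i _
          rw [Matrix.mul_apply, Finset.sum_mul]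
          apply Finset.sum_congr rfl
          intro j _
          ring
        have eV : (R * Vm * S) k l = ∑ i, ∑ j, R k i * (v (i, j) * S j l) := by
          rw [Matrix.mul_apply, Finset.sum_comm]
          apply Finset.sum_congr rfl
          intro i _
          rw [Matrix.mul_apply, Finset.sum_mul]
          apply Finset.sum_congr rfl
          intro j _
          simp [hVm]
          ring
        rw [Matrix.of_apply, Matrix.of_apply]
        calc (∑ i, ∑ j, algebraMap K (Polynomial K) (R k i) *
                (f (i, j) * algebraMap K (Polynomial K) (S j l)))
            = ∑ i, ∑ j, (Polynomial.C (R k i * (A i j * S j l)) +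
                Polynomial.X * Polynomial.C (R k i * (v (i, j) * S j l))) := by
              apply Finset.sum_congr rfl
              intro i _
              apply Finset.sum_congr rfl
              intro j _
              simp only [hf, Polynomial.algebraMap_eq, map_mul]
              ring
          _ = Polynomial.C (M k l) + Polynomial.X * Polynomial.C ((R * Vm * S) k l) := by
              simp only [Finset.sum_add_distrib]
              congr 1
              · rw [eM, map_sum]
                exact Finset.sum_congr rfl (fun i _ => by rw [map_sum])
              · rw [eV, map_sum, Finset.mul_sum]
                apply Finset.sum_congr rfl
                intro i _
                rw [map_sum, Finset.mul_sum]
      have hc1 : (MvPolynomial.aeval f (gpoly R S)).coeff 1 = (R * Vm * S) 0 0 := by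
        rw [haev, coeff_one_det M _ hrow hcol, hdetsub, mul_one]
      have hzero : (R * Vm * S) 0 0 = 0 := by rw [← hc1, hco, hg]
      have hentry : (((1 - P) * Vm * (1 - Q) : Matrix (Fin m) (Fin n) K)) i₀ j₀ =
          ((R * Vm * S : Matrix (Fin (r+1)) (Fin (r+1)) K)) 0 0 := by
        rw [Matrix.mul_apply, Matrix.mul_apply]
        apply Finset.sum_congr rfl
        intro j _
        rw [hS0, Matrix.mul_apply, Matrix.mul_apply]
        congr 1
        all_goals exact Finset.sum_congr rfl (fun i _ => by rw [hR0])
      show (((1 - P) * Vm * (1 - Q) : Matrix (Fin m) (Fin n) K)) i₀ j₀ =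
        (0 : Matrix (Fin m) (Fin n) K) i₀ j₀
      rw [hentry, hzero, Matrix.zero_apply]
    refine ⟨Vm * Ap, Ap * Vm - Ap * Vm * Ap * A, ?_⟩
    have e : (1 - P) * Vm * (1 - Q) = Vm - P * Vm - (Vm * Q - P * Vm * Q) := by
      rw [Matrix.sub_mul, Matrix.one_mul, Matrix.mul_sub, Matrix.mul_one, Matrix.sub_mul]
    rw [e] at key
    have h3 : Vm - P * Vm = Vm * Q - P * Vm * Q := sub_eq_zero.mp key
    have h4 : Vm = Vm * Q - P * Vm * Q + P * Vm := sub_eq_iff_eq_add.mp h3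
    have hVmeq : Vm * Ap * A + A * (Ap * Vm - Ap * Vm * Ap * A) = Vm := by
      rw [Matrix.mul_sub]
      conv_rhs => rw [h4]
      rw [hP, hQ]
      simp only [Matrix.mul_assoc]
      abel
    funext p
    show v p = _
    have hvp : v p = Vm p.1 p.2 := rfl
    rw [hvp]
    conv_lhs => rw [← hVmeq]
  · rintro ⟨C, C', hveq⟩ g hg
    set W : Matrix (Fin m) (Fin n) K := C * A * C' with hW
    set f : Fin m × Fin n → Polynomial K := fun p =>
      Polynomial.C (A p.1 p.2) + (Polynomial.X * Polynomial.C (v p) +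
        Polynomial.X ^ 2 * Polynomial.C (W p.1 p.2)) with hf
    have hf0 : (fun p => (f p).coeff 0) = (fun p : Fin m × Fin n => A p.1 p.2) := by
      funext p
      simp [hf, pow_two, Polynomial.mul_coeff_zero, Polynomial.coeff_X_zero]
    have hf1 : ∀ p, (f p).coeff 1 = v p := by
      intro p
      have h2 : (Polynomial.X ^ 2 * Polynomial.C (W p.1 p.2) : Polynomial K).coeff 1 = 0 := by
        rw [pow_two, mul_assoc]
        rw [Polynomial.coeff_X_mul (Polynomial.X * Polynomial.C (W p.1 p.2)) 0]
        simp [Polynomial.mul_coeff_zero, Polynomial.coeff_X_zero]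
      simp [hf, Polynomial.coeff_C, h2]
    have hco := aeval_coeff_one f g
    rw [hf0] at hco
    simp only [hf1] at hco
    rw [← hco]
    have hzero : MvPolynomial.aeval f g = 0 := by
      apply Polynomial.funext
      intro t
      rw [eval_aeval', Polynomial.eval_zero]
      rw [MvPolynomial.mem_vanishingIdeal_iff] at hg
      apply hg
      show (Matrix.of fun i j => Polynomial.eval t (f (i, j))).rank ≤ r
      have hexp : (1 + t • C) * A * (1 + t • C') =
          A + t • (C * A + A * C') + (t * t) • (C * A * C') := by
        simp only [Matrix.add_mul, Matrix.mul_add, Matrix.one_mul, Matrix.mul_one,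
          Matrix.smul_mul, Matrix.mul_smul, smul_add, smul_smul, Matrix.mul_assoc]
        abel
      have hmat : (Matrix.of fun i j => Polynomial.eval t (f (i, j))) =
          (1 + t • C) * A * (1 + t • C') := by
        rw [hexp]
        ext i j
        have hvij : v (i, j) = (C * A + A * C') i j := by rw [hveq]
        simp [hf, hvij, pow_two]
        ring
      rw [hmat]
      calc ((1 + t • C) * A * (1 + t • C')).rank
          ≤ ((1 + t • C) * A).rank := Matrix.rank_mul_le_left _ _
        _ ≤ A.rank := Matrix.rank_mul_le_right _ _
        _ = r := hA
    rw [hzero]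
    simp
end

section
/- Let K be an algebraically closed field and L ≤ K^{m×n} a linear subspace of matrices such that every matrix in L has rank at most r. Then SR(L) ≤ 2r. -/
open scoped BigOperators

section AuxSliceRank

open Matrix Polynomial

lemma triple_apply {K : Type*} [Field K] {k m n k' : ℕ} (M₁ : Matrix (Fin k) (Fin m) K)
    (M₂ : Matrix (Fin m) (Fin n) K) (M₃ : Matrix (Fin n) (Fin k') K) (p : Fin k) (q : Fin k') :
    (M₁ * M₂ * M₃) p q = (fun i => M₁ p i) ⬝ᵥ (M₂ *ᵥ (fun j => M₃ j q)) := by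
  rw [Matrix.mul_assoc]
  simp [Matrix.mul_apply, Matrix.mulVec, dotProduct]

lemma exists_left_inv {K : Type*} [Field K] {m r : ℕ} (v : Fin r → (Fin m → K))
    (hv : LinearIndependent K v) :
    ∃ G : Matrix (Fin r) (Fin m) K, ∀ q, G *ᵥ v q = Pi.single q 1 := by
  set f : (Fin r → K) →ₗ[K] (Fin m → K) := (Matrix.of fun i q => v q i).mulVecLin with hf
  have hfapp : ∀ g, f g = ∑ q, g q • v q := by
    intro g
    ext i
    simp [hf, Matrix.mulVecLin_apply, Matrix.mulVec, dotProduct, Finset.sum_apply,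
      mul_comm]
  have hker : LinearMap.ker f = ⊥ := by
    rw [LinearMap.ker_eq_bot']
    intro g hg
    rw [hfapp] at hg
    exact funext (Fintype.linearIndependent_iff.mp hv g hg)
  obtain ⟨g, hg⟩ := f.exists_leftInverse_of_injective hker
  refine ⟨LinearMap.toMatrix' g, fun q => ?_⟩
  have h1 : v q = f (Pi.single q 1) := by
    rw [hfapp]
    simp [Pi.single_apply]
  rw [h1, ← Matrix.toLin'_apply, Matrix.toLin'_toMatrix', ← LinearMap.comp_apply, hg,
    LinearMap.id_apply]

lemma coeff_one_det_s8 {K : Type*} [Field K] {k : ℕ} (E N : Matrix (Fin (k+1)) (Fin (k+1)) K)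
    (hE : ∀ p q, E p q = if p = q ∧ p ≠ Fin.last k then 1 else 0) :
    (Matrix.det (Matrix.of fun p q => (C (E p q) + C (N p q) * X : K[X]))).coeff 1 =
      N (Fin.last k) (Fin.last k) := by
  rw [Matrix.det_apply, Polynomial.finset_sum_coeff]
  simp only [Matrix.of_apply, Polynomial.coeff_smul]
  rw [Finset.sum_eq_single (1 : Equiv.Perm (Fin (k+1)))]
  · -- identity permutation
    have hsplit := Finset.mul_prod_erase Finset.univ
      (fun i => (C (E i i) + C (N i i) * X : K[X]))
      (Finset.mem_univ (Fin.last k))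
    simp only [Equiv.Perm.coe_one, id_eq, Equiv.Perm.sign_one, one_smul]
    rw [← hsplit]
    beta_reduce
    have hlast : E (Fin.last k) (Fin.last k) = 0 := by simp [hE]
    rw [hlast, map_zero, zero_add]
    have heq : C (N (Fin.last k) (Fin.last k)) * X *
        (Finset.univ.erase (Fin.last k)).prod (fun i => C (E i i) + C (N i i) * X) =
        (C (N (Fin.last k) (Fin.last k)) *
          (Finset.univ.erase (Fin.last k)).prod (fun i => C (E i i) + C (N i i) * X)) * X := by
      ring
    rw [heq, Polynomial.coeff_mul_X, Polynomial.coeff_zero_eq_eval_zero]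
    rw [Polynomial.eval_mul, Polynomial.eval_C, Polynomial.eval_prod]
    have hone : ∀ i ∈ Finset.univ.erase (Fin.last k),
        ((C (E i i) + C (N i i) * X : K[X]).eval 0) = 1 := by
      intro i hi
      have : E i i = 1 := by
        rw [hE]; simp [Finset.mem_erase.mp hi |>.1]
      simp [this]
    rw [Finset.prod_congr rfl hone]
    simp
  · -- other permutations contribute 0
    intro σ _ hσ
    have hex : ∃ j₀, j₀ ≠ Fin.last k ∧ σ j₀ ≠ j₀ := by
      obtain ⟨j, hj⟩ : ∃ j, σ j ≠ j := by
        by_contra h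
        push_neg at h
        exact hσ (Equiv.ext h)
      by_cases hjl : j = Fin.last k
      · refine ⟨σ j, ?_, fun h => hj (σ.injective h) |>.elim⟩
        rw [hjl] at hj ⊢; exact hj
      · exact ⟨j, hjl, hj⟩
    obtain ⟨j₀, hj₀l, hj₀⟩ := hex
    have hj0 : E (σ j₀) j₀ = 0 := by rw [hE]; simp [hj₀]
    have hlast : E (σ (Fin.last k)) (Fin.last k) = 0 := by
      rw [hE]
      by_cases h : σ (Fin.last k) = Fin.last k <;> simp [h]
    have hsplit := Finset.mul_prod_erase Finset.univ
      (fun i => (C (E (σ i) i) + C (N (σ i) i) * X : K[X])) (Finset.mem_univ j₀)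
    have hmem : Fin.last k ∈ Finset.univ.erase j₀ := by
      simp [Finset.mem_erase, Ne.symm hj₀l]
    have hsplit2 := Finset.mul_prod_erase (Finset.univ.erase j₀)
      (fun i => (C (E (σ i) i) + C (N (σ i) i) * X : K[X])) hmem
    rw [← hsplit, ← hsplit2]
    beta_reduce
    rw [ hj0, hlast, map_zero, zero_add, zero_add]
    have heq : C (N (σ j₀) j₀) * X * (C (N (σ (Fin.last k)) (Fin.last k)) * X *
        ((Finset.univ.erase j₀).erase (Fin.last k)).prod
          (fun i => C (E (σ i) i) + C (N (σ i) i) * X)) =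
        (C (N (σ j₀) j₀) * C (N (σ (Fin.last k)) (Fin.last k)) *
        ((Finset.univ.erase j₀).erase (Fin.last k)).prod
          (fun i => C (E (σ i) i) + C (N (σ i) i) * X)) * X ^ 2 := by
      ring
    rw [heq, Polynomial.coeff_mul_X_pow']
    simp
  · simp

lemma key_vanish {K : Type*} [Field K] [IsAlgClosed K] {m n : ℕ}
    (L : Submodule K (Matrix (Fin m) (Fin n) K)) (A B : Matrix (Fin m) (Fin n) K)
    (hA : A ∈ L) (hB : B ∈ L) (hmax : ∀ C ∈ L, C.rank ≤ A.rank)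
    (x : Fin m → K) (y : Fin n → K) (hx : x ᵥ* A = 0) (hy : A *ᵥ y = 0) :
    x ⬝ᵥ (B *ᵥ y) = 0 := by
  set r0 := A.rank with hr0
  have hfin : Module.finrank K (LinearMap.range A.mulVecLin) = r0 := rfl
  let w : Module.Basis (Fin r0) K ↥(LinearMap.range A.mulVecLin) :=
    Module.finBasisOfFinrankEq K _ hfin
  set v : Fin r0 → (Fin m → K) := fun q => (w q : Fin m → K) with hvdef
  have hv : LinearIndependent K v :=
    (w.linearIndependent).map' (Submodule.subtype _) (Submodule.ker_subtype _)
  obtain ⟨G, hG⟩ := exists_left_inv v hv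
  have hys : ∀ q, ∃ u, A *ᵥ u = v q := by
    intro q
    obtain ⟨u, hu⟩ := LinearMap.mem_range.mp (w q).2
    exact ⟨u, by rw [← Matrix.mulVecLin_apply]; exact hu⟩
  choose ys hysp using hys
  set Φ : Matrix (Fin (r0+1)) (Fin m) K :=
    Matrix.of (fun p i => if h : (p : ℕ) < r0 then G ⟨p, h⟩ i else x i) with hΦ
  set Y : Matrix (Fin n) (Fin (r0+1)) K :=
    Matrix.of (fun j q => if h : (q : ℕ) < r0 then ys ⟨q, h⟩ j else y j) with hY
  set E := Φ * A * Y with hEdef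
  set N := Φ * B * Y with hNdef
  have hYcol : ∀ q : Fin (r0+1), A *ᵥ (fun j => Y j q) =
      if h : (q : ℕ) < r0 then v ⟨q, h⟩ else 0 := by
    intro q
    by_cases h : (q : ℕ) < r0
    · rw [dif_pos h, ← hysp ⟨q, h⟩]
      congr 1
      ext j
      simp [hY, dif_pos h]
    · rw [dif_neg h, ← hy]
      congr 1
      ext j
      simp [hY, dif_neg h]
  have hE : ∀ p q, E p q = if p = q ∧ p ≠ Fin.last r0 then 1 else 0 := by
    intro p q
    rw [hEdef, triple_apply, hYcol]
    by_cases hq : (q : ℕ) < r0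
    · rw [dif_pos hq]
      by_cases hp : (p : ℕ) < r0
      · have hrow : (fun i => Φ p i) = G ⟨p, hp⟩ := by
          ext i; simp [hΦ, dif_pos hp]
        rw [hrow]
        have := congrFun (hG ⟨q, hq⟩) ⟨p, hp⟩
        rw [Matrix.mulVec] at this
        rw [this]
        by_cases hpq : p = q
        · have : (⟨(p : ℕ), hp⟩ : Fin r0) = ⟨q, hq⟩ := by simp [hpq]
          rw [this, Pi.single_eq_same, if_pos]
          refine ⟨hpq, ?_⟩
          rintro rfl
          simp at hp
        · rw [Pi.single_eq_of_ne, if_neg (fun hc => hpq hc.1)]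
          simp only [ne_eq, Fin.mk.injEq]
          intro hc
          exact hpq (Fin.ext (by simpa using hc))
      · have hrow : (fun i => Φ p i) = x := by
          ext i; simp [hΦ, dif_neg hp]
        rw [hrow, ← hysp ⟨q, hq⟩, Matrix.dotProduct_mulVec, hx, zero_dotProduct,
          if_neg]
        rintro ⟨rfl, -⟩
        exact hp hq
    · rw [dif_neg hq, dotProduct_zero, if_neg]
      rintro ⟨rfl, hne⟩
      apply hne
      have h1 := p.isLt
      exact Fin.ext (by simp only [Fin.val_last]; omega)
  have hNll : N (Fin.last r0) (Fin.last r0) = x ⬝ᵥ (B *ᵥ y) := by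
    rw [hNdef, triple_apply]
    congr 1
    · ext i; simp [hΦ, Fin.last]
    · congr 1; ext j; simp [hY, Fin.last]
  -- all determinants vanish
  have hdet0 : ∀ t : K, (E + t • N).det = 0 := by
    intro t
    by_contra hd
    have hunit : IsUnit (E + t • N) :=
      (Matrix.isUnit_iff_isUnit_det _).mpr (isUnit_iff_ne_zero.mpr hd)
    have hrk : (E + t • N).rank = r0 + 1 := by
      rw [Matrix.rank_of_isUnit _ hunit, Fintype.card_fin]
    have hmem : A + t • B ∈ L := L.add_mem hA (L.smul_mem t hB)
    have hfact : E + t • N = Φ * (A + t • B) * Y := by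
      simp [hEdef, hNdef, Matrix.mul_add, Matrix.add_mul, Matrix.mul_smul, Matrix.smul_mul]
    have hle : (E + t • N).rank ≤ r0 := by
      rw [hfact]
      calc (Φ * (A + t • B) * Y).rank ≤ (Φ * (A + t • B)).rank :=
            Matrix.rank_mul_le_left _ _
        _ ≤ (A + t • B).rank := Matrix.rank_mul_le_right _ _
        _ ≤ r0 := hmax _ hmem
    omega
  -- polynomial argument
  set M' : Matrix (Fin (r0+1)) (Fin (r0+1)) K[X] :=
    Matrix.of (fun p q => (C (E p q) + C (N p q) * X : K[X])) with hM'
  have heval : ∀ t : K, M'.det.eval t = 0 := by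
    intro t
    have h1 : M'.det.eval t = ((Polynomial.evalRingHom t).mapMatrix M').det := by
      rw [← RingHom.map_det]
      simp [Polynomial.coe_evalRingHom]
    have h2 : (Polynomial.evalRingHom t).mapMatrix M' = E + t • N := by
      ext p q
      simp only [RingHom.mapMatrix_apply, Matrix.map_apply, hM', Matrix.of_apply,
        coe_evalRingHom, Polynomial.eval_add, Polynomial.eval_mul, Polynomial.eval_C,
        Polynomial.eval_X, Matrix.add_apply, Matrix.smul_apply, smul_eq_mul]
      ring
    rw [h1, h2, hdet0]
  have hdetzero : M'.det = 0 := by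
    apply Polynomial.funext
    intro t
    rw [heval, Polynomial.eval_zero]
  have := coeff_one_det_s8 E N hE
  rw [← hM', hdetzero] at this
  rw [← hNll, ← this, Polynomial.coeff_zero]

lemma dot_sum_helper {K : Type*} [Field K] {m r0 : ℕ} (x : Fin m → K)
    (f : Fin r0 → Fin m → K) : x ⬝ᵥ (∑ s, f s) = ∑ s, x ⬝ᵥ f s := by
  simp only [dotProduct, Finset.sum_apply, Finset.mul_sum]
  exact Finset.sum_comm

lemma decomposition {K : Type*} [Field K] [IsAlgClosed K] {m n r : ℕ}
    (L : Submodule K (Matrix (Fin m) (Fin n) K)) (hL : ∀ A ∈ L, A.rank ≤ r) :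
    ∃ (r0 : ℕ), r0 ≤ r ∧ ∃ (P G : Matrix (Fin r0) (Fin m) K)
      (Y : Matrix (Fin n) (Fin r0) K) (Q : Matrix (Fin r0) (Fin n) K),
      ∀ B ∈ L, B = Pᵀ * (G * B) + ((1 - Pᵀ * G) * B * Y) * Q := by
  -- a matrix of maximal rank in L
  have hS : ∃ A, A ∈ L ∧ ∀ C ∈ L, C.rank ≤ A.rank := by
    have hne : (Matrix.rank '' (L : Set (Matrix (Fin m) (Fin n) K))).Nonempty :=
      ⟨(0 : Matrix (Fin m) (Fin n) K).rank, ⟨0, L.zero_mem, rfl⟩⟩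
    have hbdd : BddAbove (Matrix.rank '' (L : Set (Matrix (Fin m) (Fin n) K))) := by
      refine ⟨r, ?_⟩
      rintro s ⟨C, hC, rfl⟩
      exact hL C hC
    obtain ⟨A, hA, hrA⟩ := Nat.sSup_mem hne hbdd
    refine ⟨A, hA, fun C hC => ?_⟩
    rw [hrA]
    exact le_csSup hbdd ⟨C, hC, rfl⟩
  obtain ⟨A, hA, hmax⟩ := hS
  set r0 := A.rank with hr0def
  refine ⟨r0, hL A hA, ?_⟩
  have hfin : Module.finrank K (LinearMap.range A.mulVecLin) = r0 := rfl
  let w : Module.Basis (Fin r0) K ↥(LinearMap.range A.mulVecLin) :=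
    Module.finBasisOfFinrankEq K _ hfin
  set v : Fin r0 → (Fin m → K) := fun q => (w q : Fin m → K) with hvdef
  have hv : LinearIndependent K v :=
    (w.linearIndependent).map' (Submodule.subtype _) (Submodule.ker_subtype _)
  obtain ⟨G, hG⟩ := exists_left_inv v hv
  have hys : ∀ q, ∃ u, A *ᵥ u = v q := by
    intro q
    obtain ⟨u, hu⟩ := LinearMap.mem_range.mp (w q).2
    exact ⟨u, by rw [← Matrix.mulVecLin_apply]; exact hu⟩
  choose ys hysp using hys
  set P : Matrix (Fin r0) (Fin m) K := Matrix.of (fun s i => v s i) with hP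
  set Y : Matrix (Fin n) (Fin r0) K := Matrix.of (fun j t => ys t j) with hYdef
  set Q : Matrix (Fin r0) (Fin n) K := G * A with hQ
  have hrange : ∀ u (hu : u ∈ LinearMap.range A.mulVecLin),
      u = ∑ s, (w.repr ⟨u, hu⟩ s) • v s := by
    intro u hu
    have := w.sum_repr ⟨u, hu⟩
    have h2 := congrArg (Submodule.subtype _) this
    rw [map_sum] at h2
    simp only [Submodule.subtype_apply, SetLike.val_smul] at h2
    exact h2.symm
  -- G * Pᵀ = 1
  have hGPt : G * Pᵀ = 1 := by
    ext s s'
    have h1 : (G * Pᵀ) s s' = (G *ᵥ v s') s := by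
      simp [Matrix.mul_apply, Matrix.mulVec, dotProduct, hP, Matrix.transpose_apply]
    rw [h1, hG, Matrix.one_apply, Pi.single_apply]
  -- Q * Y = 1
  have hQY : Q * Y = 1 := by
    ext s t
    have h1 : (Q * Y) s t = (G *ᵥ (A *ᵥ ys t)) s := by
      rw [Matrix.mulVec_mulVec]
      simp [Matrix.mul_apply, Matrix.mulVec, dotProduct, hQ, hYdef, Matrix.mul_assoc]
    rw [h1, hysp, hG, Matrix.one_apply, Pi.single_apply]
  refine ⟨P, G, Y, Q, fun B hB => ?_⟩
  -- key: (1 - Pᵀ*G) * B * (1 - Y*Q) = 0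
  set Mx : Matrix (Fin m) (Fin m) K := 1 - Pᵀ * G with hMx
  set My : Matrix (Fin n) (Fin n) K := 1 - Y * Q with hMy
  have hz : Mx * B * My = 0 := by
    ext i j
    rw [triple_apply, Matrix.zero_apply]
    set x : Fin m → K := fun i' => Mx i i' with hxdef
    set yv : Fin n → K := fun j' => My j' j with hyvdef
    have hPx : ∀ s, x ⬝ᵥ v s = 0 := by
      intro s
      have h1 : x ⬝ᵥ v s = (Mx * Pᵀ) i s := by
        simp [Matrix.mul_apply, dotProduct, hxdef, hP, Matrix.transpose_apply]
      rw [h1, hMx, Matrix.sub_mul, Matrix.one_mul, Matrix.mul_assoc, hGPt, Matrix.mul_one,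
        sub_self, Matrix.zero_apply]
    have hx : x ᵥ* A = 0 := by
      ext j'
      have hcol : (fun i' => A i' j') ∈ LinearMap.range A.mulVecLin := by
        refine ⟨Pi.single j' 1, ?_⟩
        rw [Matrix.mulVecLin_apply, Matrix.mulVec_single]
        simp
        rfl
      have hcomb := hrange _ hcol
      show x ⬝ᵥ (fun i' => A i' j') = 0
      rw [hcomb, dot_sum_helper]
      simp only [dotProduct_smul, hPx, smul_eq_mul, mul_zero, smul_zero]
      exact Finset.sum_const_zero
    have hQyv : Q *ᵥ yv = 0 := by
      ext s
      have h1 : (Q *ᵥ yv) s = (Q * My) s j := by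
        simp [Matrix.mul_apply, Matrix.mulVec, dotProduct, hyvdef]
      rw [h1, hMy, Matrix.mul_sub, Matrix.mul_one, ← Matrix.mul_assoc, hQY, Matrix.one_mul,
        sub_self, Matrix.zero_apply]
      simp
    have hy : A *ᵥ yv = 0 := by
      have hmem : A *ᵥ yv ∈ LinearMap.range A.mulVecLin := ⟨yv, rfl⟩
      have hcomb := hrange _ hmem
      set c := w.repr ⟨A *ᵥ yv, hmem⟩ with hc
      have hGzero : G *ᵥ (A *ᵥ yv) = 0 := by
        rw [Matrix.mulVec_mulVec, ← hQ]
        exact hQyv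
      rw [hcomb] at hGzero
      have hGsum : G *ᵥ (∑ s, c s • v s) = ∑ s, c s • (G *ᵥ v s) := by
        rw [← Matrix.mulVecLin_apply, map_sum]
        simp [Matrix.mulVecLin_apply]
      rw [hGsum] at hGzero
      have hczero : ∀ s, c s = 0 := by
        intro s
        have h2 := congrFun hGzero s
        simp only [hG, Finset.sum_apply, Pi.smul_apply, Pi.single_apply, smul_eq_mul,
          Pi.zero_apply, mul_ite, mul_one, mul_zero] at h2
        rwa [Finset.sum_ite_eq Finset.univ s c, if_pos (Finset.mem_univ s)] at h2
      rw [hcomb]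
      simp [hczero]
    exact key_vanish L A B hA hB hmax x yv hx hy
  -- expand
  have hexp : Mx * B * My = B - Pᵀ * (G * B) - ((1 - Pᵀ * G) * B * Y) * Q := by
    rw [hMx, hMy]
    simp only [Matrix.sub_mul, Matrix.mul_sub, Matrix.one_mul, Matrix.mul_one,
      Matrix.mul_assoc]
  rw [hexp] at hz
  rw [sub_sub, sub_eq_zero] at hz
  exact hz

/-- A matrix space all of whose members have rank at most `r` has slice
rank at most `2r`. -/
theorem matrixSliceRank_le_of_rank_le
    {K : Type*} [Field K] [IsAlgClosed K] {m n r : ℕ}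
    (L : Submodule K (Matrix (Fin m) (Fin n) K))
    (hL : ∀ A ∈ L, Matrix.rank A ≤ r) :
    matrixSliceRank L ≤ 2 * r := by
  apply Nat.sInf_le
  show matrixSRLE L (2 * r)
  intro d B hli hspan
  obtain ⟨r0, hr0, P, G, Y, Q, hdec⟩ := decomposition L hL
  refine ⟨r0, r0, 2 * r - (r0 + r0), by omega,
    fun s i => P s i, fun s j k => (G * B k) s j,
    fun t j => Q t j, fun t i k => (((1 - Pᵀ * G) * B k * Y : Matrix (Fin m) (Fin r0) K)) i t,
    0, 0, ?_⟩
  intro i j k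
  have hBk : B k ∈ L := by
    rw [← hspan]
    exact Submodule.subset_span ⟨k, rfl⟩
  have h := congrFun (congrFun (hdec (B k) hBk) i) j
  rw [Matrix.add_apply, Matrix.mul_apply, Matrix.mul_apply] at h
  simp only [Pi.zero_apply, zero_mul, Finset.sum_const_zero, add_zero]
  rw [h]
  congr 1
  exact Finset.sum_congr rfl fun t _ => mul_comm _ _

end AuxSliceRank
end

section
/- Let F be any field and let T ∈ F^{3×3×3} be the Levi-Civita tensor, i.e., the 3-tensor whose trilinear form is the 3×3 determinant polynomial T(x,y,z) = det of the matrix with rows (x_1,x_2,x_3), (y_1,y_2,y_3), (z_1,z_2,z_3). Then SR(T) = 3. -/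
open scoped BigOperators

section Aux

variable {F : Type*} [Field F]

/-- Inner decomposition predicate with fixed split. -/
def Decomp {F : Type*} [Field F] {n1 n2 n3 : ℕ} (T : Fin n1 → Fin n2 → Fin n3 → F)
    (r1 r2 r3 : ℕ) : Prop :=
  ∃ (a : Fin r1 → Fin n1 → F) (g1 : Fin r1 → Fin n2 → Fin n3 → F)
    (b : Fin r2 → Fin n2 → F) (g2 : Fin r2 → Fin n1 → Fin n3 → F)
    (c : Fin r3 → Fin n3 → F) (g3 : Fin r3 → Fin n1 → Fin n2 → F),
    ∀ i j k, T i j k =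
      (∑ s, a s i * g1 s j k) + (∑ s, b s j * g2 s i k) + (∑ s, c s k * g3 s i j)

lemma Decomp.cyc {n1 n2 n3 r1 r2 r3 : ℕ} {T : Fin n1 → Fin n2 → Fin n3 → F}
    (h : Decomp T r1 r2 r3) :
    Decomp (fun j k i => T i j k) r2 r3 r1 := by
  obtain ⟨a, g1, b, g2, c, g3, h⟩ := h
  exact ⟨b, fun s k i => g2 s i k, c, fun s j i => g3 s i j, a, fun s j k => g1 s j k,
    fun j k i => by dsimp only; rw [h i j k]; ring⟩

lemma lc_cyc (F : Type*) [Field F] :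
    (fun (j k i : Fin 3) => leviCivita F i j k) = leviCivita F := by
  funext j k i
  fin_cases i <;> fin_cases j <;> fin_cases k <;>
    norm_num [leviCivita, Prod.ext_iff, Fin.ext_iff]

lemma keyswap {r : ℕ} (a : Fin r → Fin 3 → F) (u : Fin r → Fin 3 → F) (x y : Fin 3 → F) :
    ∑ i, ∑ j, (∑ s, a s i * u s j) * x i * y j
      = ∑ s, (∑ i, a s i * x i) * ∑ j, u s j * y j := by
  calc ∑ i, ∑ j, (∑ s, a s i * u s j) * x i * y j
      = ∑ i, ∑ j, ∑ s, a s i * x i * (u s j * y j) := by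
        refine Finset.sum_congr rfl fun i _ => Finset.sum_congr rfl fun j _ => ?_
        rw [Finset.sum_mul, Finset.sum_mul]
        exact Finset.sum_congr rfl fun s _ => by ring
    _ = ∑ i, ∑ s, ∑ j, a s i * x i * (u s j * y j) :=
        Finset.sum_congr rfl fun i _ => Finset.sum_comm
    _ = ∑ s, ∑ i, ∑ j, a s i * x i * (u s j * y j) := Finset.sum_comm
    _ = ∑ s, (∑ i, a s i * x i) * ∑ j, u s j * y j := by
        refine Finset.sum_congr rfl fun s _ => ?_
        rw [Finset.sum_mul]
        exact Finset.sum_congr rfl fun i _ => (Finset.mul_sum _ _ _).symm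

/-- from vanishing of the three 2×2 minors, proportionality. -/
lemma crossDep {x y : Fin 3 → F} (hx : x ≠ 0)
    (h0 : x 1 * y 2 = x 2 * y 1) (h1 : x 2 * y 0 = x 0 * y 2)
    (h2 : x 0 * y 1 = x 1 * y 0) : ∃ c : F, y = c • x := by
  rcases ne_or_eq (x 0) 0 with hx0 | hx0
  · refine ⟨y 0 / x 0, funext fun j => ?_⟩
    fin_cases j
    · show y 0 = y 0 / x 0 * x 0
      rw [div_mul_cancel₀ _ hx0]
    · show y 1 = y 0 / x 0 * x 1
      rw [div_mul_eq_mul_div, eq_div_iff hx0]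
      linear_combination h2
    · show y 2 = y 0 / x 0 * x 2
      rw [div_mul_eq_mul_div, eq_div_iff hx0]
      linear_combination -h1
  rcases ne_or_eq (x 1) 0 with hx1 | hx1
  · refine ⟨y 1 / x 1, funext fun j => ?_⟩
    fin_cases j
    · show y 0 = y 1 / x 1 * x 0
      rw [div_mul_eq_mul_div, eq_div_iff hx1]
      linear_combination -h2
    · show y 1 = y 1 / x 1 * x 1
      rw [div_mul_cancel₀ _ hx1]
    · show y 2 = y 1 / x 1 * x 2
      rw [div_mul_eq_mul_div, eq_div_iff hx1]
      linear_combination h0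
  rcases ne_or_eq (x 2) 0 with hx2 | hx2
  · refine ⟨y 2 / x 2, funext fun j => ?_⟩
    fin_cases j
    · show y 0 = y 2 / x 2 * x 0
      rw [div_mul_eq_mul_div, eq_div_iff hx2]
      linear_combination h1
    · show y 1 = y 2 / x 2 * x 1
      rw [div_mul_eq_mul_div, eq_div_iff hx2]
      linear_combination -h0
    · show y 2 = y 2 / x 2 * x 2
      rw [div_mul_cancel₀ _ hx2]
  · exact absurd (funext fun j => by fin_cases j <;> assumption) hx

/-- If every nonzero `x ∈ X` spans every `y ∈ Y`, then `X` small or `Y` trivial. -/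
lemma noCross {X Y : Submodule F (Fin 3 → F)}
    (hX : 2 ≤ Module.finrank F X) (hY : 1 ≤ Module.finrank F Y)
    (h : ∀ x ∈ X, x ≠ 0 → ∀ y ∈ Y, ∃ c : F, y = c • x) : False := by
  obtain ⟨v, hv⟩ := exists_linearIndependent_of_le_finrank hX
  have hv' : LinearIndependent F (fun i => (v i : Fin 3 → F)) :=
    hv.map' X.subtype (Submodule.ker_subtype X)
  have hYnt : Y ≠ ⊥ := by
    intro hbot
    rw [hbot] at hY
    have : Module.finrank F (⊥ : Submodule F (Fin 3 → F)) = 0 := finrank_bot F _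
    omega
  obtain ⟨y, hyY, hy0⟩ := Submodule.exists_mem_ne_zero_of_ne_bot hYnt
  rw [linearIndependent_fin2] at hv'
  obtain ⟨h1ne, hnsmul⟩ := hv'
  have h0ne : (v 0 : Fin 3 → F) ≠ 0 := by
    intro h0
    exact hnsmul 0 (by simp [h0])
  obtain ⟨c0, hc0⟩ := h (v 0) (v 0).2 h0ne y hyY
  obtain ⟨c1, hc1⟩ := h (v 1) (v 1).2 h1ne y hyY
  have hc0ne : c0 ≠ 0 := by
    intro h0
    rw [h0, zero_smul] at hc0
    exact hy0 hc0
  exact hnsmul (c0⁻¹ * c1)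
    (by rw [mul_smul, ← hc1, hc0, smul_smul, inv_mul_cancel₀ hc0ne, one_smul])

/-- The common kernel of `r` linear forms on `F^3` has codimension at most `r`. -/
lemma kernel_finrank {r : ℕ} (a : Fin r → Fin 3 → F) :
    ∃ X : Submodule F (Fin 3 → F),
      (∀ x ∈ X, ∀ s, ∑ i, a s i * x i = 0) ∧ 3 - r ≤ Module.finrank F X := by
  let f : (Fin 3 → F) →ₗ[F] (Fin r → F) :=
    { toFun := fun x s => ∑ i, a s i * x i
      map_add' := by
        intro x y
        funext s
        simp [mul_add, Finset.sum_add_distrib]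
      map_smul' := by
        intro c x
        funext s
        simp [Finset.mul_sum, mul_left_comm] }
  refine ⟨LinearMap.ker f, fun x hx s => ?_, ?_⟩
  · have : f x = 0 := hx
    exact congrFun this s
  · have h1 := LinearMap.finrank_range_add_finrank_ker f
    have h2 : Module.finrank F (LinearMap.range f) ≤ r := by
      have := Submodule.finrank_le (LinearMap.range f)
      rwa [Module.finrank_fin_fun] at this
    rw [Module.finrank_fin_fun] at h1
    omega

/-- No decomposition of the Levi-Civita tensor using only the first two slice types
with at most two slices. -/
lemma noThird {r1 r2 : ℕ} (hr : r1 + r2 ≤ 2) :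
    ¬ Decomp (leviCivita F) r1 r2 0 := by
  rintro ⟨a, g1, b, g2, c, g3, h⟩
  obtain ⟨X, hXker, hXrk⟩ := kernel_finrank a
  obtain ⟨Y, hYker, hYrk⟩ := kernel_finrank b
  -- the minor relations
  have minors : ∀ x ∈ X, ∀ y ∈ Y, ∀ k : Fin 3,
      ∑ i, ∑ j, leviCivita F i j k * x i * y j = 0 := by
    intro x hx y hy k
    have : ∀ i j, leviCivita F i j k =
        (∑ s, a s i * g1 s j k) + (∑ s, b s j * g2 s i k) := by
      intro i j
      rw [h i j k]
      simp
    calc ∑ i, ∑ j, leviCivita F i j k * x i * y j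
        = ∑ i, ∑ j, ((∑ s, a s i * g1 s j k) * x i * y j
            + (∑ s, b s j * g2 s i k) * x i * y j) := by
          refine Finset.sum_congr rfl fun i _ => Finset.sum_congr rfl fun j _ => ?_
          rw [this i j]; ring
      _ = (∑ i, ∑ j, (∑ s, a s i * g1 s j k) * x i * y j)
            + ∑ i, ∑ j, (∑ s, b s j * g2 s i k) * x i * y j := by
          simp [Finset.sum_add_distrib]
      _ = (∑ s, (∑ i, a s i * x i) * ∑ j, g1 s j k * y j)
            + ∑ s, (∑ j, b s j * y j) * ∑ i, g2 s i k * x i := by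
          rw [keyswap a (fun s j => g1 s j k) x y]
          congr 1
          rw [← keyswap b (fun s i => g2 s i k) y x]
          rw [Finset.sum_comm]
          exact Finset.sum_congr rfl fun i _ => Finset.sum_congr rfl fun j _ => by ring
      _ = 0 := by
          rw [Finset.sum_eq_zero fun s _ => by rw [hXker x hx s, zero_mul],
            Finset.sum_eq_zero fun s _ => by rw [hYker y hy s, zero_mul], add_zero]
  -- turn minors into proportionality
  have prop : ∀ x ∈ X, x ≠ 0 → ∀ y ∈ Y, ∃ c : F, y = c • x := by
    intro x hx hx0 y hy
    have m0 := minors x hx y hy 0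
    have m1 := minors x hx y hy 1
    have m2 := minors x hx y hy 2
    simp only [Fin.sum_univ_three] at m0 m1 m2
    norm_num [leviCivita, Fin.ext_iff, Prod.ext_iff] at m0 m1 m2
    exact crossDep hx0 (by linear_combination m0) (by linear_combination m1)
      (by linear_combination m2)
  have prop' : ∀ y ∈ Y, y ≠ 0 → ∀ x ∈ X, ∃ c : F, x = c • y := by
    intro y hy hy0 x hx
    have m0 := minors x hx y hy 0
    have m1 := minors x hx y hy 1
    have m2 := minors x hx y hy 2
    simp only [Fin.sum_univ_three] at m0 m1 m2
    norm_num [leviCivita, Fin.ext_iff, Prod.ext_iff] at m0 m1 m2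
    exact crossDep hy0 (by linear_combination -m0) (by linear_combination -m1)
      (by linear_combination -m2)
  rcases le_or_gt r1 1 with h1 | h1
  · exact noCross (by omega) (by omega) prop
  · exact noCross (X := Y) (Y := X) (by omega) (by omega) prop'

lemma lc_not_decomp {r1 r2 r3 : ℕ} (hr : r1 + r2 + r3 ≤ 2) :
    ¬ Decomp (leviCivita F) r1 r2 r3 := by
  intro h
  rcases Nat.eq_zero_or_pos r3 with h3 | h3
  · subst h3
    exact noThird (by omega) h
  rcases Nat.eq_zero_or_pos r2 with h2 | h2
  · subst h2
    have h' := h.cyc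
    rw [lc_cyc] at h'
    have h'' := h'.cyc
    rw [lc_cyc] at h''
    exact noThird (by omega) h''
  · have h1 : r1 = 0 := by omega
    subst h1
    have h' := h.cyc
    rw [lc_cyc] at h'
    exact noThird (by omega) h'

lemma lc_sliceRankLE_three : SliceRankLE (leviCivita F) 3 := by
  refine ⟨3, 0, 0, rfl, fun s i => if i = s then 1 else 0,
    fun s j k => leviCivita F s j k, Fin.elim0, Fin.elim0, Fin.elim0, Fin.elim0, ?_⟩
  intro i j k
  simp [Finset.sum_ite_eq]

end Aux

/-- The Levi-Civita tensor (the 3×3 determinant) has slice rank 3. -/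
theorem sliceRank_leviCivita {F : Type*} [Field F] :
    sliceRank (leviCivita F) = 3 := by
  have h3 : SliceRankLE (leviCivita F) 3 := lc_sliceRankLE_three
  have hub : sliceRank (leviCivita F) ≤ 3 := Nat.sInf_le h3
  have hmem : SliceRankLE (leviCivita F) (sliceRank (leviCivita F)) :=
    Nat.sInf_mem (⟨3, h3⟩ : Set.Nonempty {r | SliceRankLE (leviCivita F) r})
  obtain ⟨r1, r2, r3, hsum, a, g1, b, g2, c, g3, hdec⟩ := hmem
  by_contra hne
  have hlt : sliceRank (leviCivita F) ≤ 2 := by omega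
  exact lc_not_decomp (by omega) ⟨a, g1, b, g2, c, g3, hdec⟩
end
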